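/- Under the hypotheses of the perceptron with fixed margin condition (a₀=0, updates a_{t+1}=a_t+y_k with a_t·y_k ≤ (1−ε)γ_d‖a_t‖, ‖y_k‖ ≤ R, unit vector u with u·y_k ≥ γ_d > 0), for any integers t ≥ N ≥ 1 the bound ‖a_t‖ < (R²/(2γ_d))·(1/N + ln(t/N)) + (1−ε)·γ_d·(t−N) + R·N holds. -/

import Mathlib

open scoped InnerProductSpace

open Finset in
lemma pfm_sum_inv_lt_aux (N t : ℕ) (hN : 1 ≤ N) (ht : N < t) :
    ∑ s ∈ Finset.Ico (N+1) t, (1 / (s:ℝ)) ≤ Real.log ((t:ℝ) - 1) - Real.log N := by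
  induction t, ht using Nat.le_induction with
  | base => simp
  | succ t ht ih =>
    have h1 : (1:ℝ) ≤ (t:ℝ) - 1 := by
      have : 2 ≤ t := by omega
      have : (2:ℝ) ≤ t := by exact_mod_cast this
      linarith
    have htpos : (0:ℝ) < t := by linarith
    have hlog : 1 / (t:ℝ) ≤ Real.log t - Real.log ((t:ℝ)-1) := by
      have hx : (0:ℝ) < ((t:ℝ)-1)/t := by positivity
      have := Real.log_le_sub_one_of_pos hx
      rw [Real.log_div (by linarith) (by linarith)] at this
      have : Real.log ((t:ℝ)-1) - Real.log t ≤ ((t:ℝ)-1)/t - 1 := this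
      have heq : ((t:ℝ)-1)/t - 1 = -(1/t) := by field_simp; ring
      linarith [heq ▸ this]
    rw [Finset.sum_Ico_succ_top (by omega)]
    push_cast
    have he : ((t:ℝ) + 1 - 1) = (t:ℝ) := by ring
    rw [he]
    linarith

lemma pfm_sum_inv_lt (N t : ℕ) (hN : 1 ≤ N) (ht : N ≤ t) :
    ∑ s ∈ Finset.Ico N t, (1 / (s:ℝ)) < 1/(N:ℝ) + Real.log ((t:ℝ)/N) := by
  have hNpos : (0:ℝ) < N := by positivity
  rcases eq_or_lt_of_le ht with rfl | ht
  · simp [Real.log_div (by positivity) (by positivity)]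
    positivity
  · have htpos : (0:ℝ) < t := by
      have : 0 < t := by omega
      exact_mod_cast this
    rw [Finset.sum_eq_sum_Ico_succ_bot ht]
    have h1 : (1:ℝ) ≤ (t:ℝ) - 1 := by
      have : 2 ≤ t := by omega
      have : (2:ℝ) ≤ t := by exact_mod_cast this
      linarith
    have := pfm_sum_inv_lt_aux N t hN ht
    have hlt : Real.log ((t:ℝ)-1) < Real.log t := Real.log_lt_log (by linarith) (by linarith)
    rw [Real.log_div (by positivity) (by positivity)]
    linarith

theorem pfm_norm_bound
    {E : Type*} [NormedAddCommGroup E] [InnerProductSpace ℝ E]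
    {m : ℕ} (y : Fin m → E) (a : ℕ → E) (k : ℕ → Fin m) (u : E)
    (R γd ε : ℝ)
    (ha0 : a 0 = 0)
    (hupd : ∀ t : ℕ, a (t + 1) = a t + y (k t))
    (hmis : ∀ t : ℕ, ⟪a t, y (k t)⟫_ℝ ≤ (1 - ε) * γd * ‖a t‖)
    (hR : ∀ j, ‖y j‖ ≤ R)
    (hu : ‖u‖ = 1)
    (hγ : γd > 0)
    (hmargin : ∀ j, ⟪u, y j⟫_ℝ ≥ γd)
    (hε : 0 < ε) (hε1 : ε ≤ 1) :
    ∀ N t : ℕ, 1 ≤ N → N ≤ t →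
      ‖a t‖ < (R ^ 2 / (2 * γd)) * (1 / (N : ℝ) + Real.log ((t : ℝ) / N)) +
        (1 - ε) * γd * ((t : ℝ) - N) + R * N := by
  -- R is positive
  have hRpos : 0 < R := by
    have h1 := hmargin (k 0)
    have h2 := real_inner_le_norm u (y (k 0))
    have h3 := hR (k 0)
    rw [hu, one_mul] at h2
    linarith
  -- lower bound on inner product
  have hinner : ∀ s : ℕ, γd * s ≤ ⟪u, a s⟫_ℝ := by
    intro s
    induction s with
    | zero => simp [ha0]
    | succ s ih =>
      rw [hupd s, inner_add_right]
      have := hmargin (k s)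
      push_cast
      linarith
  -- lower bound on norm
  have hlow : ∀ s : ℕ, γd * s ≤ ‖a s‖ := by
    intro s
    have h2 := real_inner_le_norm u (a s)
    rw [hu, one_mul] at h2
    linarith [hinner s]
  -- upper bound on norm
  have hupN : ∀ s : ℕ, ‖a s‖ ≤ R * s := by
    intro s
    induction s with
    | zero => simp [ha0]
    | succ s ih =>
      rw [hupd s]
      have := norm_add_le (a s) (y (k s))
      have := hR (k s)
      push_cast
      linarith
  -- one step bound
  have hstep : ∀ s : ℕ, 1 ≤ s →
      ‖a (s+1)‖ ≤ ‖a s‖ + ((1-ε)*γd + R^2/(2*γd*(s:ℝ))) := by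
    intro s hs
    have hspos : (0:ℝ) < s := by
      have : 0 < s := hs
      exact_mod_cast this
    set d : ℝ := R^2/(2*γd*(s:ℝ)) with hd
    have hdpos : 0 < d := by positivity
    have hdmul : d * (2*γd*(s:ℝ)) = R^2 := by
      rw [hd]; field_simp
    have hsq : ‖a (s+1)‖^2 ≤ ‖a s‖^2 + 2*((1-ε)*γd*‖a s‖) + R^2 := by
      rw [hupd s, norm_add_sq_real]
      have h1 := hmis s
      have h2 := hR (k s)
      have h3 : ‖y (k s)‖^2 ≤ R^2 := by nlinarith [norm_nonneg (y (k s))]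
      nlinarith
    have hc : 0 ≤ (1-ε)*γd + d := by
      have : 0 ≤ (1-ε)*γd := mul_nonneg (by linarith) (le_of_lt hγ)
      linarith
    have hlows := hlow s
    have hsq2 : ‖a (s+1)‖^2 ≤ (‖a s‖ + ((1-ε)*γd + d))^2 := by nlinarith
    nlinarith [norm_nonneg (a (s+1)), norm_nonneg (a s)]
  intro N t hN ht
  have hNpos : (0:ℝ) < N := by positivity
  -- key induction
  have key : ∀ t : ℕ, N ≤ t → ‖a t‖ ≤ R * N + (1-ε)*γd*((t:ℝ)-N)
      + (R^2/(2*γd)) * ∑ s ∈ Finset.Ico N t, (1/(s:ℝ)) := by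
    intro t ht
    induction t, ht using Nat.le_induction with
    | base =>
      simp [Finset.Ico_self]
      linarith [hupN N]
    | succ t ht ih =>
      have h1 : 1 ≤ t := le_trans hN ht
      have htpos : (0:ℝ) < t := by
        have : 0 < t := h1
        exact_mod_cast this
      have hs := hstep t h1
      rw [Finset.sum_Ico_succ_top ht]
      have hdiv : R^2/(2*γd*(t:ℝ)) = (R^2/(2*γd)) * (1/(t:ℝ)) := by
        field_simp
      push_cast
      rw [mul_add]
      rw [hdiv] at hs
      have : (1-ε)*γd*((t:ℝ)+1-N) = (1-ε)*γd*((t:ℝ)-N) + (1-ε)*γd := by ring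
      rw [this]
      linarith
  have hsum := pfm_sum_inv_lt N t hN ht
  have hcoef : 0 < R^2/(2*γd) := by positivity
  have hfin := key t ht
  nlinarith [hfin, hsum, hcoef]
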